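/- For each index 1 ≤ i ≤ N, writing S_i = {n_1 < n_2 < … < n_k}, the iterated Lie bracket [⋯[[D_0, D_{n_1}], D_{n_2}], …, D_{n_k}] equals the constant vector field φ ↦ λ (μ/√2)^k · e_i on ℝ^N, where e_i is the i-th standard basis vector of ℝ^N. -/

import Mathlib

open scoped BigOperators

noncomputable section

/-- Vector fields on `ℝ^N`. -/
abbrev VF (N : ℕ) := (Fin N → ℝ) → Fin N → ℝ

/-- The Lie bracket `[V,W](φ) = DW(φ)(V(φ)) − DV(φ)(W(φ))` of vector fields. -/
def lieBracket {N : ℕ} (V W : VF N) : VF N :=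
  fun φ => fderiv ℝ W φ (V φ) - fderiv ℝ V φ (W φ)

/-- The drift vector field `D₀`. -/
def Dfield0 {N : ℕ} (lam μ : ℝ) (k : ℕ) : VF N :=
  fun φ i => (lam - (k : ℝ) * μ ^ 2 / 2) * φ i + lam

/-- The diffusion vector fields `D_j`, `1 ≤ j ≤ n`. -/
def DfieldJ {n N : ℕ} (μ : ℝ) (S : Fin N → Finset (Fin n)) (j : Fin n) : VF N :=
  fun φ i => (μ / Real.sqrt 2) * (φ i * if j ∈ S i then 1 else 0)

/-- `D_j` as a continuous linear map. -/
def LJ {n N : ℕ} (μ : ℝ) (S : Fin N → Finset (Fin n)) (j : Fin n) :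
    (Fin N → ℝ) →L[ℝ] (Fin N → ℝ) :=
  ContinuousLinearMap.pi fun i =>
    (μ / Real.sqrt 2 * if j ∈ S i then 1 else 0) • ContinuousLinearMap.proj i

/-- Linear part of `D₀` as a continuous linear map. -/
def A0 {N : ℕ} (lam μ : ℝ) (k : ℕ) : (Fin N → ℝ) →L[ℝ] (Fin N → ℝ) :=
  ContinuousLinearMap.pi fun i =>
    (lam - (k : ℝ) * μ ^ 2 / 2) • ContinuousLinearMap.proj i

lemma DfieldJ_eq {n N : ℕ} (μ : ℝ) (S : Fin N → Finset (Fin n)) (j : Fin n) :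
    DfieldJ μ S j = ⇑(LJ μ S j) := by
  funext φ i
  simp only [DfieldJ, LJ, ContinuousLinearMap.pi_apply, ContinuousLinearMap.smul_apply,
    ContinuousLinearMap.proj_apply, smul_eq_mul]
  ring

lemma fderiv_DfieldJ {n N : ℕ} (μ : ℝ) (S : Fin N → Finset (Fin n)) (j : Fin n)
    (φ : Fin N → ℝ) : fderiv ℝ (DfieldJ μ S j) φ = LJ μ S j := by
  rw [DfieldJ_eq]
  exact (LJ μ S j).fderiv

lemma Dfield0_eq {N : ℕ} (lam μ : ℝ) (k : ℕ) :
    (Dfield0 lam μ k : VF N) = fun φ => A0 lam μ k φ + fun _ => lam := by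
  funext φ i
  simp [Dfield0, A0]

lemma fderiv_Dfield0 {N : ℕ} (lam μ : ℝ) (k : ℕ) (φ : Fin N → ℝ) :
    fderiv ℝ (Dfield0 lam μ k : VF N) φ = A0 lam μ k := by
  rw [Dfield0_eq]
  rw [fderiv_add_const]
  exact (A0 lam μ k).fderiv

lemma lieBracket_D0 {n N : ℕ} (lam μ : ℝ) (k : ℕ) (S : Fin N → Finset (Fin n)) (j : Fin n) :
    lieBracket (Dfield0 lam μ k) (DfieldJ μ S j) =
      fun _ m => (μ / Real.sqrt 2) * lam * (if j ∈ S m then 1 else 0) := by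
  funext φ m
  simp only [lieBracket, fderiv_DfieldJ, fderiv_Dfield0, Pi.sub_apply, LJ, A0, Dfield0,
    DfieldJ, ContinuousLinearMap.pi_apply, ContinuousLinearMap.smul_apply,
    ContinuousLinearMap.proj_apply, smul_eq_mul]
  ring

lemma lieBracket_const {n N : ℕ} (μ : ℝ) (S : Fin N → Finset (Fin n)) (j : Fin n)
    (v : Fin N → ℝ) :
    lieBracket (fun _ => v) (DfieldJ μ S j) =
      fun _ m => (μ / Real.sqrt 2) * v m * (if j ∈ S m then 1 else 0) := by
  funext φ m
  simp only [lieBracket, fderiv_DfieldJ, fderiv_const, fderiv_fun_const, Pi.zero_apply,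
    ContinuousLinearMap.zero_apply, Pi.sub_apply, LJ, ContinuousLinearMap.pi_apply,
    ContinuousLinearMap.smul_apply, ContinuousLinearMap.proj_apply, smul_eq_mul]
  ring

lemma foldl_const {n N : ℕ} (μ : ℝ) (S : Fin N → Finset (Fin n)) (l : List (Fin n))
    (v : Fin N → ℝ) :
    l.foldl (fun V j => lieBracket V (DfieldJ μ S j)) (fun _ => v) =
      fun _ m => (μ / Real.sqrt 2) ^ l.length * v m *
        (l.map (fun j => if j ∈ S m then (1:ℝ) else 0)).prod := by
  induction l generalizing v with
  | nil => funext φ m; simp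
  | cons j t ih =>
      simp only [List.foldl_cons, lieBracket_const]
      rw [ih]
      funext φ m
      simp only [List.length_cons, List.map_cons, List.prod_cons]
      ring

theorem iterated_lie_bracket_eq_basis_vector
    (n k N : ℕ) (hk : 1 ≤ k) (hkn : k < n) (hN : N = n.choose k)
    (S : Fin N → Finset (Fin n)) (hSinj : Function.Injective S)
    (hScard : ∀ i, (S i).card = k)
    (μ lam : ℝ) (hμ : μ ≠ 0) (hlam : 0 < lam) (i : Fin N) :
    ((S i).sort (· ≤ ·)).foldl (fun V j => lieBracket V (DfieldJ μ S j))
        (Dfield0 lam μ k) =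
      fun _ : Fin N → ℝ =>
        (lam * (μ / Real.sqrt 2) ^ k) • (Pi.single i 1 : Fin N → ℝ) := by
  set l := (S i).sort (· ≤ ·) with hl
  have hlen : l.length = k := by rw [hl, Finset.length_sort, hScard]
  have hmem : ∀ j, j ∈ l ↔ j ∈ S i := fun j => Finset.mem_sort _
  have hne : l ≠ [] := by
    intro h; rw [h, List.length_nil] at hlen; omega
  obtain ⟨j₀, t, hcons⟩ := List.exists_cons_of_ne_nil hne
  rw [hcons, List.foldl_cons, lieBracket_D0, foldl_const]
  funext φ m
  have hprod : ((if j₀ ∈ S m then (1:ℝ) else 0) *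
      (t.map (fun j => if j ∈ S m then (1:ℝ) else 0)).prod) =
      ∏ j ∈ S i, (if j ∈ S m then (1:ℝ) else 0) := by
    have hmap : (if j₀ ∈ S m then (1:ℝ) else 0) ::
        t.map (fun j => if j ∈ S m then (1:ℝ) else 0) =
        l.map (fun j => if j ∈ S m then (1:ℝ) else 0) := by
      rw [hcons, List.map_cons]
    rw [← List.prod_cons, hmap]
    have hperm : List.Perm l (S i).toList := Finset.sort_perm_toList _ _
    rw [(hperm.map _).prod_eq, Finset.prod_map_toList]
  have hdelta : (∏ j ∈ S i, (if j ∈ S m then (1:ℝ) else 0)) =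
      if m = i then 1 else 0 := by
    by_cases hsub : S i ⊆ S m
    · have : S i = S m := Finset.eq_of_subset_of_card_le hsub (by rw [hScard, hScard])
      have hmi : m = i := hSinj this.symm
      rw [if_pos hmi]
      exact Finset.prod_eq_one fun j hj => if_pos (this ▸ hj)
    · obtain ⟨j, hj, hjm⟩ := Finset.not_subset.mp hsub
      rw [Finset.prod_eq_zero hj (by simp [hjm])]
      have : m ≠ i := by rintro rfl; exact hjm hj
      simp [this]
  have htlen : t.length = k - 1 := by
    have := hlen; rw [hcons] at this; simp at this; omega
  rw [htlen]
  calc (μ / Real.sqrt 2) ^ (k-1) * (μ / Real.sqrt 2 * lam * (if j₀ ∈ S m then (1:ℝ) else 0)) *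
        (t.map (fun j => if j ∈ S m then (1:ℝ) else 0)).prod
      = (μ / Real.sqrt 2) ^ (k-1) * (μ / Real.sqrt 2) * lam *
        ((if j₀ ∈ S m then (1:ℝ) else 0) *
          (t.map (fun j => if j ∈ S m then (1:ℝ) else 0)).prod) := by ring
    _ = (lam * (μ / Real.sqrt 2) ^ k) * (if m = i then 1 else 0) := by
        rw [hprod, hdelta, ← pow_succ]
        have : k - 1 + 1 = k := by omega
        rw [this]; ring
    _ = (lam * (μ / Real.sqrt 2) ^ k) • (Pi.single i 1 : Fin N → ℝ) m := by
        rw [Pi.single_apply, smul_eq_mul]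

end
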